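/- Let $a<b$ be real, let $T_0:[a,b]\to M_n(\mathbb{C})$ be continuously differentiable and $T_1,T_2,T_3:[a,b]\to M_n(\mathbb{C})$ be continuous, all skew-hermitian valued, let $c,x_1,x_2,x_3\in\mathbb{R}$, and set $\gamma = T_0 - ic$. Let $x_0\in(a,b)$ and $u,u_a,u_b\in\mathbb{C}^n$. Then there exists a unique continuous $v:[a,b]\to\mathbb{C}^n$ which is twice continuously differentiable on $[a,x_0]$ and on $[x_0,b]$, satisfies $(v'+\gamma v)' + \gamma(v'+\gamma v) + \sum_{j=1}^3 (T_j - ix_j)^2 v = 0$ on $[a,x_0)$ and on $(x_0,b]$, has $v(a)=u_a$, $v(b)=u_b$, and whose one-sided derivatives at $x_0$ satisfy the jump condition $v'(x_0^+)-v'(x_0^-)=u$. -/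

import Mathlib

open Matrix Set



section LinearODE
variable {E : Type*} [NormedAddCommGroup E] [NormedSpace ℝ E]

lemma glue_hasDerivWithinAt {a c b : ℝ} (hac : a ≤ c) (hcb : c ≤ b)
    {f g f' g' : ℝ → E}
    (hf : ∀ t ∈ Icc a c, HasDerivWithinAt f (f' t) (Icc a c) t)
    (hg : ∀ t ∈ Icc c b, HasDerivWithinAt g (g' t) (Icc c b) t)
    (hfg : f c = g c) (hd : f' c = g' c) :
    ∀ t ∈ Icc a b, HasDerivWithinAt (fun s => if s ≤ c then f s else g s)
      (if t ≤ c then f' t else g' t) (Icc a b) t := by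
  intro t ht
  rcases lt_trichotomy t c with htc | htc | htc
  · rw [if_pos htc.le]
    have hsub : Icc a b ∩ Iio c ⊆ Icc a c := fun x hx => ⟨hx.1.1, hx.2.le⟩
    have h1 : HasDerivWithinAt f (f' t) (Icc a b ∩ Iio c) t :=
      (hf t ⟨ht.1, htc.le⟩).mono hsub
    have h2 : HasDerivWithinAt (fun s => if s ≤ c then f s else g s) (f' t)
        (Icc a b ∩ Iio c) t :=
      h1.congr (fun x hx => by simp [(mem_Iio.mp hx.2).le]) (by simp [htc.le])
    exact (hasDerivWithinAt_inter (Iio_mem_nhds htc)).1 h2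
  · subst htc
    rw [if_pos le_rfl]
    rw [← Icc_union_Icc_eq_Icc hac hcb]
    refine HasDerivWithinAt.union ?_ ?_
    · exact (hf t ⟨hac, le_rfl⟩).congr (fun x hx => by simp [hx.2]) (by simp)
    · have h2 : HasDerivWithinAt g (f' t) (Icc t b) t := hd ▸ hg t ⟨le_rfl, hcb⟩
      refine h2.congr (fun x hx => ?_) (by simp [hfg])
      by_cases hxc : x ≤ t
      · have : x = t := le_antisymm hxc hx.1
        simp [this, hfg]
      · simp [hxc]
  · rw [if_neg (not_le.mpr htc)]
    have hsub : Icc a b ∩ Ioi c ⊆ Icc c b := fun x hx => ⟨hx.2.le, hx.1.2⟩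
    have h1 : HasDerivWithinAt g (g' t) (Icc a b ∩ Ioi c) t :=
      (hg t ⟨htc.le, ht.2⟩).mono hsub
    have h2 : HasDerivWithinAt (fun s => if s ≤ c then f s else g s) (g' t)
        (Icc a b ∩ Ioi c) t :=
      h1.congr (fun x hx => by simp [not_le.mpr (mem_Ioi.mp hx.2)]) (by simp [not_le.mpr htc])
    exact (hasDerivWithinAt_inter (Ioi_mem_nhds htc)).1 h2

variable [CompleteSpace E]

lemma picard_lin_step (A : ℝ → E →L[ℝ] E) (hA : Continuous A) {M c c' : ℝ}
    (hM : ∀ t ∈ Icc c c', ‖A t‖ ≤ M) (hcc' : c ≤ c') (hstep : M * (c' - c) ≤ 1/2)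
    (x₀ : E) :
    ∃ f : ℝ → E, f c = x₀ ∧ ∀ t ∈ Icc c c', HasDerivWithinAt f (A t (f t)) (Icc c c') t := by
  have hM0 : 0 ≤ M := le_trans (norm_nonneg _) (hM c ⟨le_rfl, hcc'⟩)
  refine IsPicardLindelof.exists_eq_forall_mem_Icc_hasDerivWithinAt₀
    (f := fun t x => A t x) (tmin := c) (tmax := c') (t₀ := ⟨c, le_rfl, hcc'⟩) (x₀ := x₀)
    (a := ⟨‖x₀‖ + 1, by positivity⟩) (L := ⟨M * (2 * ‖x₀‖ + 1), by positivity⟩)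
    (K := ⟨M, hM0⟩) ?_
  constructor
  · intro t ht
    refine ((A t).lipschitz.weaken ?_).lipschitzOnWith
    exact (NNReal.coe_le_coe (r₁ := ‖A t‖₊) (r₂ := ⟨M, hM0⟩)).1 (hM t ht)
  · intro x _
    exact (hA.clm_apply continuous_const).continuousOn
  · intro t ht x hx
    have h0 : ‖x - x₀‖ ≤ ‖x₀‖ + 1 := mem_closedBall_iff_norm.1 hx
    have h1 : ‖x‖ ≤ ‖x₀‖ + (‖x₀‖ + 1) := by
      calc ‖x‖ = ‖x₀ + (x - x₀)‖ := by congr 1; abel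
        _ ≤ ‖x₀‖ + ‖x - x₀‖ := norm_add_le _ _
        _ ≤ ‖x₀‖ + (‖x₀‖ + 1) := by linarith
    show ‖A t x‖ ≤ M * (2 * ‖x₀‖ + 1)
    calc ‖A t x‖ ≤ ‖A t‖ * ‖x‖ := (A t).le_opNorm x
      _ ≤ M * (2 * ‖x₀‖ + 1) := by
          apply mul_le_mul (hM t ht) (by linarith) (norm_nonneg _) hM0
  · show M * (2 * ‖x₀‖ + 1) * max (c' - c) (c - c) ≤ ‖x₀‖ + 1 - 0
    rw [sub_zero]
    have hmax : max (c' - c) (c - c) = c' - c := by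
      apply max_eq_left; linarith
    rw [hmax]
    nlinarith [norm_nonneg x₀, mul_le_mul_of_nonneg_left hstep
      (by positivity : (0:ℝ) ≤ 2 * ‖x₀‖ + 1)]

lemma exists_linear_ode_left (A : ℝ → E →L[ℝ] E) (hA : Continuous A) {a b : ℝ}
    (hab : a ≤ b) (x₀ : E) :
    ∃ f : ℝ → E, f a = x₀ ∧ ∀ t ∈ Icc a b, HasDerivWithinAt f (A t (f t)) (Icc a b) t := by
  obtain ⟨M, hM⟩ := isCompact_Icc.exists_bound_of_continuousOn
    (hA.continuousOn : ContinuousOn A (Icc a b))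
  have hM0 : 0 ≤ M := le_trans (norm_nonneg _) (hM a ⟨le_rfl, hab⟩)
  set ℓ : ℝ := 1 / (2 * M + 2) with hℓdef
  have hℓ : 0 < ℓ := by positivity
  have hMℓ : M * ℓ ≤ 1/2 := by
    rw [hℓdef, mul_one_div, div_le_div_iff₀ (by linarith) (by norm_num)]
    linarith
  have key : ∀ k : ℕ, ∃ f : ℝ → E, f a = x₀ ∧
      ∀ t ∈ Icc a (min (a + k * ℓ) b),
        HasDerivWithinAt f (A t (f t)) (Icc a (min (a + k * ℓ) b)) t := by
    intro k
    induction k with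
    | zero =>
      refine ⟨fun _ => x₀, rfl, ?_⟩
      have h0 : min (a + ((0:ℕ):ℝ) * ℓ) b = a := by norm_num [min_eq_left hab]
      rw [h0, Icc_self]
      intro t ht
      rw [mem_singleton_iff] at ht
      subst ht
      rw [hasDerivWithinAt_iff_tendsto_slope]
      simp [nhdsWithin_empty]
    | succ k ih =>
      obtain ⟨f, hfa, hf⟩ := ih
      set c := min (a + k * ℓ) b with hc
      set c' := min (a + (k + 1 : ℕ) * ℓ) b with hc'
      have hac : a ≤ c := le_min (by nlinarith [Nat.cast_nonneg (α := ℝ) k]) hab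
      have hcc' : c ≤ c' := min_le_min (by push_cast; nlinarith) le_rfl
      have hc'b : c' ≤ b := min_le_right _ _
      have hcb : c ≤ b := min_le_right _ _
      have hlen : c' - c ≤ ℓ := by
        rcases le_total (a + k * ℓ) b with h | h
        · have : c = a + k * ℓ := min_eq_left h
          have h2 : c' ≤ a + (k+1:ℕ) * ℓ := min_le_left _ _
          push_cast at h2 ⊢
          rw [this]; push_cast; linarith
        · have h1 : c = b := min_eq_right h
          have h2 : c' = b := min_eq_right (by push_cast; nlinarith)
          rw [h1, h2]; linarith
      obtain ⟨g, hgc, hg⟩ := picard_lin_step A hA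
        (fun t ht => hM t ⟨le_trans hac ht.1, le_trans ht.2 hc'b⟩) hcc'
        (by nlinarith) (f c)
      refine ⟨fun s => if s ≤ c then f s else g s, ?_, ?_⟩
      · show (if a ≤ c then f a else g a) = x₀
        rw [if_pos hac, hfa]
      · intro t ht
        rw [← Icc_union_Icc_eq_Icc hac hcc', Icc_union_Icc_eq_Icc hac hcc'] at ht
        have h := glue_hasDerivWithinAt hac hcc' hf hg hgc.symm (by rw [hgc]) t ht
        rw [← Icc_union_Icc_eq_Icc hac hcc', Icc_union_Icc_eq_Icc hac hcc']
        by_cases htc : t ≤ c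
        · simpa [htc] using h
        · simpa [htc] using h
  obtain ⟨k, hk⟩ := exists_nat_ge ((b - a) / ℓ)
  obtain ⟨f, hfa, hf⟩ := key k
  have : min (a + k * ℓ) b = b := by
    rw [min_eq_right]
    rw [div_le_iff₀ hℓ] at hk
    linarith
  rw [this] at hf
  exact ⟨f, hfa, hf⟩

end LinearODE


variable {E : Type*} [NormedAddCommGroup E] [NormedSpace ℝ E]


lemma exists_linear_ode_right [CompleteSpace E] (A : ℝ → E →L[ℝ] E) (hA : Continuous A) {a b : ℝ}
    (hab : a ≤ b) (x₀ : E) :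
    ∃ f : ℝ → E, f b = x₀ ∧ ∀ t ∈ Icc a b, HasDerivWithinAt f (A t (f t)) (Icc a b) t := by
  obtain ⟨g, hg0, hg⟩ := exists_linear_ode_left (fun t => -(A (a + b - t)))
    (by exact (hA.comp (by continuity)).neg) hab x₀
  refine ⟨fun t => g (a + b - t), by simp [hg0], fun t ht => ?_⟩
  have hσ : HasDerivWithinAt (fun t : ℝ => a + b - t) (-1 : ℝ) (Icc a b) t := by
    simpa using ((hasDerivAt_id t).const_sub (a + b)).hasDerivWithinAt
  have hmaps : MapsTo (fun t : ℝ => a + b - t) (Icc a b) (Icc a b) := fun x hx =>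
    ⟨by have := hx.2; simp at this ⊢; linarith, by have := hx.1; simp at this ⊢; linarith⟩
  have h := HasDerivWithinAt.scomp t (hg (a + b - t) (hmaps ht)) hσ hmaps
  have harg : a + b - (a + b - t) = t := by ring
  rw [harg] at h
  simpa [Function.comp_def] using h

lemma linear_ode_unique (A : ℝ → E →L[ℝ] E) (hA : Continuous A) {a b t₀ : ℝ}
    (hab : a ≤ b) (ht₀ : t₀ ∈ Icc a b) {f g : ℝ → E}
    (hfc : ContinuousOn f (Icc a b))
    (hf : ∀ t ∈ Icc a b, HasDerivWithinAt f (A t (f t)) (Icc a b) t)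
    (hgc : ContinuousOn g (Icc a b))
    (hg : ∀ t ∈ Icc a b, HasDerivWithinAt g (A t (g t)) (Icc a b) t)
    (heq : f t₀ = g t₀) : EqOn f g (Icc a b) := by
  obtain ⟨M, hM⟩ := isCompact_Icc.exists_bound_of_continuousOn
    (hA.continuousOn : ContinuousOn A (Icc a b))
  have hM0 : 0 ≤ M := le_trans (norm_nonneg _) (hM a ⟨le_rfl, hab⟩)
  set v : ℝ → E → E := fun t x => A (projIcc a b hab t) x with hv_def
  have hv : ∀ t, LipschitzOnWith ⟨M, hM0⟩ (v t) univ := by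
    intro t
    refine ((A (projIcc a b hab t)).lipschitz.weaken ?_).lipschitzOnWith
    exact (NNReal.coe_le_coe (r₁ := ‖A (projIcc a b hab t)‖₊) (r₂ := ⟨M, hM0⟩)).1
      (hM _ (projIcc a b hab t).2)
  have hveq : ∀ t ∈ Icc a b, ∀ x : E, v t x = A t x := by
    intro t ht x
    simp [hv_def, projIcc_of_mem hab ht]
  -- right half
  have hright : EqOn f g (Icc t₀ b) := by
    refine ODE_solution_unique_of_mem_Icc_right (v := v) (s := fun _ => univ) (fun t _ => hv t)
      (hfc.mono (Icc_subset_Icc ht₀.1 le_rfl)) ?_ (fun _ _ => trivial)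
      (hgc.mono (Icc_subset_Icc ht₀.1 le_rfl)) ?_ (fun _ _ => trivial) heq
    all_goals {
      intro t ht
      have hsub : Ici t ∩ Iio b ⊆ Icc a b := fun x hx =>
        ⟨le_trans (le_trans ht₀.1 ht.1) hx.1, (mem_Iio.mp hx.2).le⟩
      rw [hveq t ⟨le_trans ht₀.1 ht.1, ht.2.le⟩]
      first
      | exact (hasDerivWithinAt_inter (Iio_mem_nhds ht.2)).1
          ((hf t ⟨le_trans ht₀.1 ht.1, ht.2.le⟩).mono hsub)
      | exact (hasDerivWithinAt_inter (Iio_mem_nhds ht.2)).1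
          ((hg t ⟨le_trans ht₀.1 ht.1, ht.2.le⟩).mono hsub) }
  -- left half
  have hleft : EqOn f g (Icc a t₀) := by
    refine ODE_solution_unique_of_mem_Icc_left (v := v) (s := fun _ => univ) (fun t _ => hv t)
      (hfc.mono (Icc_subset_Icc le_rfl ht₀.2)) ?_ (fun _ _ => trivial)
      (hgc.mono (Icc_subset_Icc le_rfl ht₀.2)) ?_ (fun _ _ => trivial) heq
    all_goals {
      intro t ht
      have hsub : Iic t ∩ Ioi a ⊆ Icc a b := fun x hx =>
        ⟨(mem_Ioi.mp hx.2).le, le_trans hx.1 (le_trans ht.2 ht₀.2)⟩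
      rw [hveq t ⟨ht.1.le, le_trans ht.2 ht₀.2⟩]
      first
      | exact (hasDerivWithinAt_inter (Ioi_mem_nhds ht.1)).1
          ((hf t ⟨ht.1.le, le_trans ht.2 ht₀.2⟩).mono hsub)
      | exact (hasDerivWithinAt_inter (Ioi_mem_nhds ht.1)).1
          ((hg t ⟨ht.1.le, le_trans ht.2 ht₀.2⟩).mono hsub) }
  rw [← Icc_union_Icc_eq_Icc ht₀.1 ht₀.2]
  exact hleft.union hright


variable {n : ℕ}

/-- `mulVec` as a continuous `ℝ`-linear map. -/
noncomputable def matCLM (M : Matrix (Fin n) (Fin n) ℂ) : (Fin n → ℂ) →L[ℝ] (Fin n → ℂ) :=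
  LinearMap.toContinuousLinearMap ((M.mulVecLin).restrictScalars ℝ)

@[simp] lemma matCLM_apply (M : Matrix (Fin n) (Fin n) ℂ) (x : Fin n → ℂ) :
    matCLM M x = M.mulVec x := rfl

lemma continuous_matCLM : Continuous (matCLM (n := n)) := by
  have h : IsLinearMap ℝ (matCLM (n := n)) := by
    constructor
    · intro M N; ext x i; simp [Matrix.add_mulVec]
    · intro c M; ext x i
      simp [Matrix.smul_mulVec]
  exact (IsLinearMap.mk' _ h).continuous_of_finiteDimensional

/-- the first-order system map `(p, q) ↦ (q, P p + Q q)` -/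
noncomputable def sysA (P Q : Matrix (Fin n) (Fin n) ℂ) :
    ((Fin n → ℂ) × (Fin n → ℂ)) →L[ℝ] ((Fin n → ℂ) × (Fin n → ℂ)) :=
  (ContinuousLinearMap.snd ℝ _ _).prod
    ((matCLM P).comp (ContinuousLinearMap.fst ℝ _ _) +
      (matCLM Q).comp (ContinuousLinearMap.snd ℝ _ _))

@[simp] lemma sysA_apply (P Q : Matrix (Fin n) (Fin n) ℂ) (x : (Fin n → ℂ) × (Fin n → ℂ)) :
    sysA P Q x = (x.2, P.mulVec x.1 + Q.mulVec x.2) := rfl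

lemma continuous_sysA {P Q : ℝ → Matrix (Fin n) (Fin n) ℂ}
    (hP : Continuous P) (hQ : Continuous Q) :
    Continuous (fun t => sysA (P t) (Q t)) := by
  have h1 : Continuous fun t => (matCLM (P t)).comp
      (ContinuousLinearMap.fst ℝ (Fin n → ℂ) (Fin n → ℂ)) := by
    have : IsLinearMap ℝ (fun M : (Fin n → ℂ) →L[ℝ] (Fin n → ℂ) =>
        M.comp (ContinuousLinearMap.fst ℝ (Fin n → ℂ) (Fin n → ℂ))) :=
      ⟨fun f g => by ext x <;> rfl, fun c f => by ext x <;> rfl⟩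
    exact ((IsLinearMap.mk' _ this).continuous_of_finiteDimensional).comp
      (continuous_matCLM.comp hP)
  have h2 : Continuous fun t => (matCLM (Q t)).comp
      (ContinuousLinearMap.snd ℝ (Fin n → ℂ) (Fin n → ℂ)) := by
    have : IsLinearMap ℝ (fun M : (Fin n → ℂ) →L[ℝ] (Fin n → ℂ) =>
        M.comp (ContinuousLinearMap.snd ℝ (Fin n → ℂ) (Fin n → ℂ))) :=
      ⟨fun f g => by ext x <;> rfl, fun c f => by ext x <;> rfl⟩
    exact ((IsLinearMap.mk' _ this).continuous_of_finiteDimensional).comp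
      (continuous_matCLM.comp hQ)
  have h3 : Continuous fun t => ((matCLM (P t)).comp
      (ContinuousLinearMap.fst ℝ (Fin n → ℂ) (Fin n → ℂ)) +
      (matCLM (Q t)).comp (ContinuousLinearMap.snd ℝ (Fin n → ℂ) (Fin n → ℂ))) := h1.add h2
  have h5 : IsLinearMap ℝ (fun M : ((Fin n → ℂ) × (Fin n → ℂ)) →L[ℝ] (Fin n → ℂ) =>
      (0 : ((Fin n → ℂ) × (Fin n → ℂ)) →L[ℝ] (Fin n → ℂ)).prod M) :=
    ⟨fun f g => ContinuousLinearMap.ext fun x => by simp [Prod.ext_iff],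
     fun c f => ContinuousLinearMap.ext fun x => by simp [Prod.ext_iff]⟩
  have hdecomp : ∀ t, sysA (P t) (Q t) =
      ((ContinuousLinearMap.snd ℝ (Fin n → ℂ) (Fin n → ℂ)).prod 0) +
      (0 : ((Fin n → ℂ) × (Fin n → ℂ)) →L[ℝ] (Fin n → ℂ)).prod
        ((matCLM (P t)).comp (ContinuousLinearMap.fst ℝ (Fin n → ℂ) (Fin n → ℂ)) +
          (matCLM (Q t)).comp (ContinuousLinearMap.snd ℝ (Fin n → ℂ) (Fin n → ℂ))) := by
    intro t
    refine ContinuousLinearMap.ext fun x => ?_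
    simp [sysA, Prod.ext_iff]
  simp only [hdecomp]
  exact continuous_const.add (((IsLinearMap.mk' _ h5).continuous_of_finiteDimensional).comp h3)

/-- derivative of `t ↦ (γ t).mulVec (w t)` -/
lemma hasDerivWithinAt_mulVec {γ γt' : ℝ → Matrix (Fin n) (Fin n) ℂ}
    {w w' : ℝ → Fin n → ℂ} {s : Set ℝ} {t : ℝ}
    (hγ : ∀ i j, HasDerivWithinAt (fun z => γ z i j) (γt' t i j) s t)
    (hw : HasDerivWithinAt w (w' t) s t) :
    HasDerivWithinAt (fun z => (γ z).mulVec (w z))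
      ((γt' t).mulVec (w t) + (γ t).mulVec (w' t)) s t := by
  rw [hasDerivWithinAt_pi]
  intro i
  have hcomp : ∀ j, HasDerivWithinAt (fun z => γ z i j * w z j)
      (γt' t i j * w t j + γ t i j * w' t j) s t := by
    intro j
    exact (hγ i j).mul (hasDerivWithinAt_pi.1 hw j)
  have := HasDerivWithinAt.sum (u := Finset.univ) (fun j _ => hcomp j)
  convert this using 1 <;>
  simp [Matrix.mulVec, dotProduct, Finset.sum_add_distrib, Finset.sum_fn]

lemma hasDerivWithinAt_dotStar {f g : ℝ → Fin n → ℂ} {f' g' : Fin n → ℂ}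
    {s : Set ℝ} {t : ℝ}
    (hf : HasDerivWithinAt f f' s t) (hg : HasDerivWithinAt g g' s t) :
    HasDerivWithinAt (fun z => star (f z) ⬝ᵥ g z)
      (star f' ⬝ᵥ g t + star (f t) ⬝ᵥ g') s t := by
  have hterm : ∀ i : Fin n, HasDerivWithinAt (fun z => star (f z i) * g z i)
      (star (f' i) * g t i + star (f t i) * g' i) s t := fun i =>
    ((hasDerivWithinAt_pi.1 hf i).star).mul (hasDerivWithinAt_pi.1 hg i)
  have := HasDerivWithinAt.sum (u := Finset.univ) (fun i _ => hterm i)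
  convert this using 1
  · rfl
  all_goals simp [dotProduct, Pi.star_apply, Finset.sum_add_distrib, Finset.sum_fn]

lemma re_star_dot_nonneg (x : Fin n → ℂ) : 0 ≤ (star x ⬝ᵥ x).re := by
  have : (star x ⬝ᵥ x) = ∑ i, (Complex.normSq (x i) : ℂ) := by
    simp [dotProduct, Pi.star_apply, mul_comm, Complex.mul_conj]
  rw [this]
  simp only [Complex.re_sum, Complex.ofReal_re]
  exact Finset.sum_nonneg fun i _ => Complex.normSq_nonneg _

lemma eq_zero_of_re_star_dot_eq_zero {x : Fin n → ℂ} (h : (star x ⬝ᵥ x).re = 0) : x = 0 := by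
  have he : (star x ⬝ᵥ x) = ∑ i, (Complex.normSq (x i) : ℂ) := by
    simp [dotProduct, Pi.star_apply, mul_comm, Complex.mul_conj]
  rw [he] at h
  simp only [Complex.re_sum, Complex.ofReal_re] at h
  funext i
  have := (Finset.sum_eq_zero_iff_of_nonneg (fun j _ => Complex.normSq_nonneg (x j))).1 h
    i (Finset.mem_univ i)
  simpa [Complex.normSq_eq_zero] using this

lemma star_dot_mulVec (M : Matrix (Fin n) (Fin n) ℂ) (x y : Fin n → ℂ) :
    star x ⬝ᵥ M.mulVec y = star (Mᴴ.mulVec x) ⬝ᵥ y := by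
  rw [Matrix.dotProduct_mulVec, Matrix.star_mulVec, Matrix.conjTranspose_conjTranspose]


variable {n : ℕ}

section Helpers
variable {F : Type*} [NormedAddCommGroup F] [NormedSpace ℝ F]

/-- extend a vanishing identity from `Ico` to `Icc` by continuity -/
lemma eq_zero_Icc_of_Ico {h : ℝ → F} {l r : ℝ} (hlr : l < r)
    (hc : ContinuousOn h (Icc l r)) (h0 : ∀ t ∈ Ico l r, h t = 0) :
    ∀ t ∈ Icc l r, h t = 0 := by
  intro t ht
  rcases lt_or_eq_of_le ht.2 with htr | htr
  · exact h0 t ⟨ht.1, htr⟩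
  · rw [htr]
    have h1 : ContinuousWithinAt h (Ico l r) r :=
      (hc r (right_mem_Icc.mpr hlr.le)).mono Ico_subset_Icc_self
    have h2 : Filter.Tendsto h (nhdsWithin r (Ico l r)) (nhds 0) := by
      refine Filter.Tendsto.congr' ?_ (tendsto_const_nhds (α := ℝ) (f := nhdsWithin r (Ico l r)))
      filter_upwards [self_mem_nhdsWithin] with x hx
      exact (h0 x hx).symm
    have := right_nhdsWithin_Ico_neBot hlr
    exact tendsto_nhds_unique h1.tendsto h2
/-- extend a vanishing identity from `Ioc` to `Icc` by continuity -/
lemma eq_zero_Icc_of_Ioc {h : ℝ → F} {l r : ℝ} (hlr : l < r)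
    (hc : ContinuousOn h (Icc l r)) (h0 : ∀ t ∈ Ioc l r, h t = 0) :
    ∀ t ∈ Icc l r, h t = 0 := by
  intro t ht
  rcases lt_or_eq_of_le ht.1 with htr | htr
  · exact h0 t ⟨htr, ht.2⟩
  · rw [← htr]
    have h1 : ContinuousWithinAt h (Ioc l r) l :=
      (hc l (left_mem_Icc.mpr hlr.le)).mono Ioc_subset_Icc_self
    have h2 : Filter.Tendsto h (nhdsWithin l (Ioc l r)) (nhds 0) := by
      refine Filter.Tendsto.congr' ?_ (tendsto_const_nhds (α := ℝ) (f := nhdsWithin l (Ioc l r)))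
      filter_upwards [self_mem_nhdsWithin] with x hx
      exact (h0 x hx).symm
    have := left_nhdsWithin_Ioc_neBot hlr
    exact tendsto_nhds_unique h1.tendsto h2

/-- gluing continuity of a piecewise function -/
lemma glue_continuousOn {a c b : ℝ} (hac : a ≤ c) (hcb : c ≤ b)
    {f g : ℝ → F}
    (hf : ContinuousOn f (Icc a c)) (hg : ContinuousOn g (Icc c b))
    (hfg : f c = g c) :
    ContinuousOn (fun s => if s ≤ c then f s else g s) (Icc a b) := by
  intro t ht
  rcases lt_trichotomy t c with htc | htc | htc
  · have hsub : Icc a b ∩ Iio c ⊆ Icc a c := fun x hx => ⟨hx.1.1, hx.2.le⟩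
    have h1 : ContinuousWithinAt f (Icc a b ∩ Iio c) t :=
      (hf t ⟨ht.1, htc.le⟩).mono hsub
    have h2 : ContinuousWithinAt (fun s => if s ≤ c then f s else g s)
        (Icc a b ∩ Iio c) t := by
      refine h1.congr (fun x hx => by simp [(mem_Iio.mp hx.2).le]) (by simp [htc.le])
    rw [← continuousWithinAt_inter (Iio_mem_nhds htc)]
    exact h2
  · subst htc
    rw [show (Icc a b) = Icc a t ∪ Icc t b from (Icc_union_Icc_eq_Icc hac hcb).symm]
    refine ContinuousWithinAt.union ?_ ?_
    · exact (hf t ⟨hac, le_rfl⟩).congr (fun x hx => by simp [hx.2]) (by simp)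
    · refine ((hg t ⟨le_rfl, hcb⟩).congr (fun x hx => ?_) (by simp [hfg]))
      by_cases hxc : x ≤ t
      · have : x = t := le_antisymm hxc hx.1
        simp [this, hfg]
      · simp [hxc]
  · have hsub : Icc a b ∩ Ioi c ⊆ Icc c b := fun x hx => ⟨hx.2.le, hx.1.2⟩
    have h1 : ContinuousWithinAt g (Icc a b ∩ Ioi c) t :=
      (hg t ⟨htc.le, ht.2⟩).mono hsub
    have h2 : ContinuousWithinAt (fun s => if s ≤ c then f s else g s)
        (Icc a b ∩ Ioi c) t :=
      h1.congr (fun x hx => by simp [not_le.mpr (mem_Ioi.mp hx.2)]) (by simp [not_le.mpr htc])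
    rw [← continuousWithinAt_inter (Ioi_mem_nhds htc)]
    exact h2

lemma hasDerivWithinAt_unique {f : ℝ → F} {d₁ d₂ : F} {s : Set ℝ} {t : ℝ}
    (hs : UniqueDiffWithinAt ℝ s t)
    (h₁ : HasDerivWithinAt f d₁ s t) (h₂ : HasDerivWithinAt f d₂ s t) : d₁ = d₂ := by
  have e := UniqueDiffWithinAt.eq hs h₁.hasFDerivWithinAt h₂.hasFDerivWithinAt
  have := congrArg (fun (L : ℝ →L[ℝ] F) => L 1) e
  simpa using this

end Helpers


/-- key algebraic identity using skew-hermitian structure -/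
lemma key_energy_identity (γm t1 t2 t3 : Matrix (Fin n) (Fin n) ℂ)
    (hγ : γmᴴ = -γm) (h1 : t1ᴴ = -t1) (h2 : t2ᴴ = -t2) (h3 : t3ᴴ = -t3)
    (wv w'v : Fin n → ℂ) :
    (star w'v ⬝ᵥ (w'v + γm.mulVec wv)
      + star wv ⬝ᵥ (-(γm.mulVec (w'v + γm.mulVec wv))
          - ((t1*t1) + (t2*t2) + (t3*t3)).mulVec wv)).re
    = (star (w'v + γm.mulVec wv) ⬝ᵥ (w'v + γm.mulVec wv)).re
      + (star (t1.mulVec wv) ⬝ᵥ t1.mulVec wv).re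
      + (star (t2.mulVec wv) ⬝ᵥ t2.mulVec wv).re
      + (star (t3.mulVec wv) ⬝ᵥ t3.mulVec wv).re := by
  set D := w'v + γm.mulVec wv with hD
  have e1 : star wv ⬝ᵥ (γm.mulVec D) = -(star (γm.mulVec wv) ⬝ᵥ D) := by
    rw [star_dot_mulVec, hγ, Matrix.neg_mulVec, star_neg, neg_dotProduct]
  have esq : ∀ (t' : Matrix (Fin n) (Fin n) ℂ), t'ᴴ = -t' →
      star wv ⬝ᵥ ((t'*t').mulVec wv) = -(star (t'.mulVec wv) ⬝ᵥ (t'.mulVec wv)) := by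
    intro t' ht'
    rw [← Matrix.mulVec_mulVec, star_dot_mulVec, ht', Matrix.neg_mulVec, star_neg,
      neg_dotProduct]
  have expand : star wv ⬝ᵥ (-(γm.mulVec D) - ((t1*t1) + (t2*t2) + (t3*t3)).mulVec wv)
      = star (γm.mulVec wv) ⬝ᵥ D + star (t1.mulVec wv) ⬝ᵥ (t1.mulVec wv)
        + star (t2.mulVec wv) ⬝ᵥ (t2.mulVec wv) + star (t3.mulVec wv) ⬝ᵥ (t3.mulVec wv) := by
    simp only [dotProduct_sub, dotProduct_neg, Matrix.add_mulVec,
      dotProduct_add, e1, esq t1 h1, esq t2 h2, esq t3 h3]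
    ring
  rw [expand]
  have hDsplit : star D ⬝ᵥ D = star w'v ⬝ᵥ D + star (γm.mulVec wv) ⬝ᵥ D := by
    rw [hD]
    rw [star_add, add_dotProduct]
  rw [hDsplit]
  simp [Complex.add_re]
  ring


variable {n : ℕ}







/-- pointwise simplification of the derivative of `D = w' + γ w` -/
lemma Dd_simplify (g g' u1 u2 u3 : Matrix (Fin n) (Fin n) ℂ) (wv w'v : Fin n → ℂ) :
    (-((g' + g*g + u1 + u2 + u3).mulVec wv) - (2:ℂ) • (g.mulVec w'v))
      + (g'.mulVec wv + g.mulVec w'v)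
    = -(g.mulVec (w'v + g.mulVec wv)) - (u1 + u2 + u3).mulVec wv := by
  simp only [Matrix.add_mulVec, Matrix.mulVec_add, ← Matrix.mulVec_mulVec, two_smul]
  abel

/-- The energy argument on one closed interval. -/
lemma energy_aux {l r : ℝ} (hlr : l < r)
    (γ γ' t1 t2 t3 : ℝ → Matrix (Fin n) (Fin n) ℂ)
    (hγd : ∀ t ∈ Icc l r, ∀ i j, HasDerivWithinAt (fun s => γ s i j) (γ' t i j) (Icc l r) t)
    (hγskew : ∀ t ∈ Icc l r, (γ t)ᴴ = -(γ t))
    (h1skew : ∀ t ∈ Icc l r, (t1 t)ᴴ = -(t1 t))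
    (h2skew : ∀ t ∈ Icc l r, (t2 t)ᴴ = -(t2 t))
    (h3skew : ∀ t ∈ Icc l r, (t3 t)ᴴ = -(t3 t))
    (w w' : ℝ → Fin n → ℂ)
    (hw : ∀ t ∈ Icc l r, HasDerivWithinAt w (w' t) (Icc l r) t)
    (hw' : ∀ t ∈ Icc l r, HasDerivWithinAt w'
      (-(((γ' t) + γ t * γ t + (t1 t*t1 t) + (t2 t*t2 t) + (t3 t*t3 t)).mulVec (w t))
        - (2:ℂ) • ((γ t).mulVec (w' t))) (Icc l r) t) :
    MonotoneOn (fun t => (star (w t) ⬝ᵥ (w' t + (γ t).mulVec (w t))).re) (Icc l r) ∧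
    ((∀ t ∈ Icc l r, (star (w t) ⬝ᵥ (w' t + (γ t).mulVec (w t))).re = 0) →
      ∀ t ∈ Icc l r, w' t + (γ t).mulVec (w t) = 0) := by
  set D : ℝ → Fin n → ℂ := fun t => w' t + (γ t).mulVec (w t) with hDdef
  set φ : ℝ → ℝ := fun t => (star (w t) ⬝ᵥ D t).re with hφdef
  set ψ : ℝ → ℝ := fun t => (star (D t) ⬝ᵥ D t).re
      + (star ((t1 t).mulVec (w t)) ⬝ᵥ (t1 t).mulVec (w t)).re
      + (star ((t2 t).mulVec (w t)) ⬝ᵥ (t2 t).mulVec (w t)).re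
      + (star ((t3 t).mulVec (w t)) ⬝ᵥ (t3 t).mulVec (w t)).re with hψdef
  -- derivative of D
  have hD : ∀ t ∈ Icc l r, HasDerivWithinAt D
      (-((γ t).mulVec (D t)) - ((t1 t*t1 t) + (t2 t*t2 t) + (t3 t*t3 t)).mulVec (w t))
      (Icc l r) t := by
    intro t ht
    have h1 := (hw' t ht).add (hasDerivWithinAt_mulVec (fun i j => hγd t ht i j) (hw t ht))
    rw [Dd_simplify] at h1
    exact h1
  -- derivative of φ
  have hφ : ∀ t ∈ Icc l r, HasDerivWithinAt φ (ψ t) (Icc l r) t := by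
    intro t ht
    have hdot := hasDerivWithinAt_dotStar (hw t ht) (hD t ht)
    have hre := (Complex.reCLM.hasFDerivAt (x := star (w t) ⬝ᵥ D t)).comp_hasDerivWithinAt
      t hdot
    have hval : Complex.reCLM (star (w' t) ⬝ᵥ D t + star (w t) ⬝ᵥ
        (-((γ t).mulVec (D t)) - ((t1 t*t1 t) + (t2 t*t2 t) + (t3 t*t3 t)).mulVec (w t)))
        = ψ t := by
      have := key_energy_identity (γ t) (t1 t) (t2 t) (t3 t)
        (hγskew t ht) (h1skew t ht) (h2skew t ht) (h3skew t ht) (w t) (w' t)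
      simpa [hψdef, hDdef] using this
    rw [hval] at hre
    exact hre
  have hψ0 : ∀ t ∈ Icc l r, 0 ≤ ψ t := by
    intro t ht
    have n1 := re_star_dot_nonneg (D t)
    have n2 := re_star_dot_nonneg ((t1 t).mulVec (w t))
    have n3 := re_star_dot_nonneg ((t2 t).mulVec (w t))
    have n4 := re_star_dot_nonneg ((t3 t).mulVec (w t))
    simp only [hψdef]
    linarith
  have hφcont : ContinuousOn φ (Icc l r) := fun t ht => (hφ t ht).continuousWithinAt
  constructor
  · refine monotoneOn_of_hasDerivWithinAt_nonneg (f' := ψ) (convex_Icc l r) hφcont ?_ ?_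
    · intro t ht
      rw [interior_Icc] at ht ⊢
      exact (hφ t (Ioo_subset_Icc_self ht)).mono Ioo_subset_Icc_self
    · intro t ht
      rw [interior_Icc] at ht
      exact hψ0 t (Ioo_subset_Icc_self ht)
  · intro hzero t ht
    have hconst : HasDerivWithinAt φ 0 (Icc l r) t := by
      refine (hasDerivWithinAt_const t (Icc l r) (0:ℝ)).congr ?_ ?_
      · intro y hy; exact hzero y hy
      · exact hzero t ht
    have hψt : ψ t = 0 := hasDerivWithinAt_unique (uniqueDiffOn_Icc hlr t ht) (hφ t ht) hconst
    have n2 := re_star_dot_nonneg ((t1 t).mulVec (w t))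
    have n3 := re_star_dot_nonneg ((t2 t).mulVec (w t))
    have n4 := re_star_dot_nonneg ((t3 t).mulVec (w t))
    have n1 := re_star_dot_nonneg (D t)
    have hD0 : (star (D t) ⬝ᵥ D t).re = 0 := by
      simp only [hψdef] at hψt
      linarith
    exact eq_zero_of_re_star_dot_eq_zero hD0


variable {n : ℕ}



/-- From `w' = -(γ t) w` on `[l,r]` with `w t₀ = 0`, conclude `w ≡ 0`. -/
lemma first_order_vanish {l r t₀ : ℝ} (hlr : l ≤ r) (ht₀ : t₀ ∈ Icc l r)
    (γ : ℝ → Matrix (Fin n) (Fin n) ℂ)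
    (hγcont : ∀ i j, ContinuousOn (fun t => γ t i j) (Icc l r))
    {w w' : ℝ → Fin n → ℂ}
    (hw : ∀ t ∈ Icc l r, HasDerivWithinAt w (w' t) (Icc l r) t)
    (hD0 : ∀ t ∈ Icc l r, w' t + (γ t).mulVec (w t) = 0)
    (h0 : w t₀ = 0) : ∀ t ∈ Icc l r, w t = 0 := by
  set B : ℝ → (Fin n → ℂ) →L[ℝ] (Fin n → ℂ) :=
    fun t => matCLM (-(γ (projIcc l r hlr t))) with hBdef
  have hγc : ContinuousOn (fun t => γ t) (Icc l r) :=
    continuousOn_pi.2 fun i => continuousOn_pi.2 fun j => hγcont i j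
  have hB : Continuous B := by
    refine continuous_matCLM.comp ?_
    exact (hγc.restrict.comp continuous_projIcc).neg
  have hwc : ContinuousOn w (Icc l r) := fun t ht => (hw t ht).continuousWithinAt
  have hfw : ∀ t ∈ Icc l r, HasDerivWithinAt w (B t (w t)) (Icc l r) t := by
    intro t ht
    have : B t (w t) = w' t := by
      rw [hBdef]
      simp only [projIcc_of_mem hlr ht, matCLM_apply, Matrix.neg_mulVec]
      have h2 : w' t = -((γ t).mulVec (w t)) :=
        eq_neg_of_add_eq_zero_left (hD0 t ht)
      rw [h2]
    rw [this]
    exact hw t ht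
  have hg : ∀ t ∈ Icc l r, HasDerivWithinAt (fun _ : ℝ => (0 : Fin n → ℂ))
      (B t ((fun _ : ℝ => (0 : Fin n → ℂ)) t)) (Icc l r) t := by
    intro t ht
    simpa using hasDerivWithinAt_const t (Icc l r) (0 : Fin n → ℂ)
  have := linear_ode_unique B hB hlr ht₀ hwc hfw continuousOn_const hg h0
  exact fun t ht => this ht


variable {n : ℕ}



/-- The main energy/uniqueness lemma: a piecewise-C² solution of the homogeneous
equation with zero boundary values and no derivative jump vanishes identically. -/
lemma energy_vanish {a b x₀ : ℝ} (hx₀ : x₀ ∈ Ioo a b)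
    (γ γ' t1 t2 t3 : ℝ → Matrix (Fin n) (Fin n) ℂ)
    (hγd : ∀ t ∈ Icc a b, ∀ i j, HasDerivWithinAt (fun s => γ s i j) (γ' t i j) (Icc a b) t)
    (hγskew : ∀ t ∈ Icc a b, (γ t)ᴴ = -(γ t))
    (h1skew : ∀ t ∈ Icc a b, (t1 t)ᴴ = -(t1 t))
    (h2skew : ∀ t ∈ Icc a b, (t2 t)ᴴ = -(t2 t))
    (h3skew : ∀ t ∈ Icc a b, (t3 t)ᴴ = -(t3 t))
    (w wl' wr' : ℝ → Fin n → ℂ)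
    (hwl : ∀ t ∈ Icc a x₀, HasDerivWithinAt w (wl' t) (Icc a x₀) t)
    (hwl' : ∀ t ∈ Icc a x₀, HasDerivWithinAt wl'
      (-(((γ' t) + γ t * γ t + (t1 t*t1 t) + (t2 t*t2 t) + (t3 t*t3 t)).mulVec (w t))
        - (2:ℂ) • ((γ t).mulVec (wl' t))) (Icc a x₀) t)
    (hwr : ∀ t ∈ Icc x₀ b, HasDerivWithinAt w (wr' t) (Icc x₀ b) t)
    (hwr' : ∀ t ∈ Icc x₀ b, HasDerivWithinAt wr'
      (-(((γ' t) + γ t * γ t + (t1 t*t1 t) + (t2 t*t2 t) + (t3 t*t3 t)).mulVec (w t))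
        - (2:ℂ) • ((γ t).mulVec (wr' t))) (Icc x₀ b) t)
    (hjump : wr' x₀ = wl' x₀) (hwa : w a = 0) (hwb : w b = 0) :
    (∀ t ∈ Icc a x₀, w t = 0 ∧ wl' t = 0) ∧ (∀ t ∈ Icc x₀ b, w t = 0 ∧ wr' t = 0) := by
  obtain ⟨hax₀, hx₀b⟩ := hx₀
  have hsubL : Icc a x₀ ⊆ Icc a b := Icc_subset_Icc le_rfl hx₀b.le
  have hsubR : Icc x₀ b ⊆ Icc a b := Icc_subset_Icc hax₀.le le_rfl
  -- left piece
  obtain ⟨MlM, Ml0⟩ := energy_aux hax₀ γ γ' t1 t2 t3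
    (fun t ht i j => ((hγd t (hsubL ht) i j).mono hsubL))
    (fun t ht => hγskew t (hsubL ht)) (fun t ht => h1skew t (hsubL ht))
    (fun t ht => h2skew t (hsubL ht)) (fun t ht => h3skew t (hsubL ht))
    w wl' hwl hwl'
  obtain ⟨MrM, Mr0⟩ := energy_aux hx₀b γ γ' t1 t2 t3
    (fun t ht i j => ((hγd t (hsubR ht) i j).mono hsubR))
    (fun t ht => hγskew t (hsubR ht)) (fun t ht => h1skew t (hsubR ht))
    (fun t ht => h2skew t (hsubR ht)) (fun t ht => h3skew t (hsubR ht))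
    w wr' hwr hwr'
  set φl : ℝ → ℝ := fun t => (star (w t) ⬝ᵥ (wl' t + (γ t).mulVec (w t))).re with hφl
  set φr : ℝ → ℝ := fun t => (star (w t) ⬝ᵥ (wr' t + (γ t).mulVec (w t))).re with hφr
  have hmatch : φl x₀ = φr x₀ := by simp only [hφl, hφr, hjump]
  have hφla : φl a = 0 := by rw [hφl]; simp [hwa]
  have hφrb : φr b = 0 := by rw [hφr]; simp [hwb]
  -- φ vanishes identically
  have hφl0 : ∀ t ∈ Icc a x₀, φl t = 0 := by
    intro t ht
    have h1 : φl a ≤ φl t := MlM (left_mem_Icc.mpr hax₀.le) ht ht.1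
    have h2 : φl t ≤ φl x₀ := MlM ht (right_mem_Icc.mpr hax₀.le) ht.2
    have h3 : φr x₀ ≤ φr b := MrM (left_mem_Icc.mpr hx₀b.le) (right_mem_Icc.mpr hx₀b.le) hx₀b.le
    rw [hφla] at h1
    rw [hmatch] at h2
    rw [hφrb] at h3
    linarith
  have hφr0 : ∀ t ∈ Icc x₀ b, φr t = 0 := by
    intro t ht
    have h1 : φr x₀ ≤ φr t := MrM (left_mem_Icc.mpr hx₀b.le) ht ht.1
    have h2 : φr t ≤ φr b := MrM ht (right_mem_Icc.mpr hx₀b.le) ht.2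
    have h4 : φl a ≤ φl x₀ := MlM (left_mem_Icc.mpr hax₀.le) (right_mem_Icc.mpr hax₀.le) hax₀.le
    rw [hφrb] at h2
    rw [hφla] at h4
    rw [← hmatch] at h1
    linarith
  have hDl0 := Ml0 hφl0
  have hDr0 := Mr0 hφr0
  -- first-order vanishing
  have hγcontL : ∀ i j, ContinuousOn (fun t => γ t i j) (Icc a x₀) := fun i j t ht =>
    ((hγd t (hsubL ht) i j).mono hsubL).continuousWithinAt
  have hγcontR : ∀ i j, ContinuousOn (fun t => γ t i j) (Icc x₀ b) := fun i j t ht =>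
    ((hγd t (hsubR ht) i j).mono hsubR).continuousWithinAt
  have hw0L : ∀ t ∈ Icc a x₀, w t = 0 :=
    first_order_vanish hax₀.le (left_mem_Icc.mpr hax₀.le) γ hγcontL hwl hDl0 hwa
  have hw0R : ∀ t ∈ Icc x₀ b, w t = 0 :=
    first_order_vanish hx₀b.le (right_mem_Icc.mpr hx₀b.le) γ hγcontR hwr hDr0 hwb
  constructor
  · intro t ht
    refine ⟨hw0L t ht, ?_⟩
    have := hDl0 t ht
    rw [hw0L t ht] at this
    simpa using this
  · intro t ht
    refine ⟨hw0R t ht, ?_⟩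
    have := hDr0 t ht
    rw [hw0R t ht] at this
    simpa using this


variable {n : ℕ}


lemma skew_shift (M : Matrix (Fin n) (Fin n) ℂ) (x : ℝ) (h : Mᴴ = -M) :
    (M - (Complex.I * (x:ℂ)) • (1 : Matrix (Fin n) (Fin n) ℂ))ᴴ
      = -(M - (Complex.I * (x:ℂ)) • (1 : Matrix (Fin n) (Fin n) ℂ)) := by
  rw [Matrix.conjTranspose_sub, h, Matrix.conjTranspose_smul, Matrix.conjTranspose_one]
  have hc : star (Complex.I * (x:ℂ)) = -(Complex.I * (x:ℂ)) := by
    simp only [Complex.star_def, _root_.map_mul, Complex.conj_I, Complex.conj_ofReal]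
    ring
  rw [hc, neg_smul]
  abel

/-- The big expression in `IsGreensNahmSol` rewritten as a difference. -/
lemma bigExpr_eq (A0 A0' A1 A2 A3 : Matrix (Fin n) (Fin n) ℂ) (c x1 x2 x3 : ℝ)
    (W W' W'' : Fin n → ℂ) :
    (W'' + A0'.mulVec W
        + (A0 - (Complex.I * ((c : ℝ) : ℂ))
            • (1 : Matrix (Fin n) (Fin n) ℂ)).mulVec W')
      + (A0 - (Complex.I * ((c : ℝ) : ℂ))
            • (1 : Matrix (Fin n) (Fin n) ℂ)).mulVec
          (W' + (A0 - (Complex.I * ((c : ℝ) : ℂ))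
            • (1 : Matrix (Fin n) (Fin n) ℂ)).mulVec W)
      + ((A1 - (Complex.I * ((x1 : ℝ) : ℂ)) • (1 : Matrix (Fin n) (Fin n) ℂ))
          * (A1 - (Complex.I * ((x1 : ℝ) : ℂ)) • (1 : Matrix (Fin n) (Fin n) ℂ))).mulVec W
      + ((A2 - (Complex.I * ((x2 : ℝ) : ℂ)) • (1 : Matrix (Fin n) (Fin n) ℂ))
          * (A2 - (Complex.I * ((x2 : ℝ) : ℂ)) • (1 : Matrix (Fin n) (Fin n) ℂ))).mulVec W
      + ((A3 - (Complex.I * ((x3 : ℝ) : ℂ)) • (1 : Matrix (Fin n) (Fin n) ℂ))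
          * (A3 - (Complex.I * ((x3 : ℝ) : ℂ)) • (1 : Matrix (Fin n) (Fin n) ℂ))).mulVec W
    = W'' - (-((A0' + (A0 - (Complex.I * ((c : ℝ) : ℂ)) • (1 : Matrix (Fin n) (Fin n) ℂ))
            * (A0 - (Complex.I * ((c : ℝ) : ℂ)) • (1 : Matrix (Fin n) (Fin n) ℂ))
          + (A1 - (Complex.I * ((x1 : ℝ) : ℂ)) • (1 : Matrix (Fin n) (Fin n) ℂ))
            * (A1 - (Complex.I * ((x1 : ℝ) : ℂ)) • (1 : Matrix (Fin n) (Fin n) ℂ))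
          + (A2 - (Complex.I * ((x2 : ℝ) : ℂ)) • (1 : Matrix (Fin n) (Fin n) ℂ))
            * (A2 - (Complex.I * ((x2 : ℝ) : ℂ)) • (1 : Matrix (Fin n) (Fin n) ℂ))
          + (A3 - (Complex.I * ((x3 : ℝ) : ℂ)) • (1 : Matrix (Fin n) (Fin n) ℂ))
            * (A3 - (Complex.I * ((x3 : ℝ) : ℂ)) • (1 : Matrix (Fin n) (Fin n) ℂ))).mulVec W)
        - (2:ℂ) • ((A0 - (Complex.I * ((c : ℝ) : ℂ))
            • (1 : Matrix (Fin n) (Fin n) ℂ)).mulVec W')) := by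
  simp only [Matrix.add_mulVec, Matrix.mulVec_add, ← Matrix.mulVec_mulVec, two_smul,
    Matrix.neg_mulVec]
  abel

lemma contOn_mulVec {M : ℝ → Matrix (Fin n) (Fin n) ℂ} {x : ℝ → Fin n → ℂ} {s : Set ℝ}
    (hM : ContinuousOn M s) (hx : ContinuousOn x s) :
    ContinuousOn (fun t => (M t).mulVec (x t)) s := by
  have h := (continuous_matCLM.comp_continuousOn hM).clm_apply hx
  have he : (fun t => matCLM (M t) (x t)) = fun t => (M t).mulVec (x t) := by
    funext t; rw [matCLM_apply]
  rw [← he]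
  exact h

lemma continuousOn_matrix {f : ℝ → Matrix (Fin n) (Fin n) ℂ} {s : Set ℝ}
    (h : ∀ i j, ContinuousOn (fun t => f t i j) s) : ContinuousOn f s := by
  rw [continuousOn_iff_continuous_restrict]
  exact continuous_matrix fun i j => (h i j).restrict

lemma contOn_matmul {n : ℕ} {f g : ℝ → Matrix (Fin n) (Fin n) ℂ} {s : Set ℝ}
    (hf : ContinuousOn f s) (hg : ContinuousOn g s) :
    ContinuousOn (fun x => f x * g x) s :=
  continuousOn_iff_continuous_restrict.2
    ((continuousOn_iff_continuous_restrict.1 hf).matrix_mul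
      (continuousOn_iff_continuous_restrict.1 hg))

lemma sysA_smulC {n : ℕ} (P Q : Matrix (Fin n) (Fin n) ℂ) (cc : ℂ)
    (x : (Fin n → ℂ) × (Fin n → ℂ)) : sysA P Q (cc • x) = cc • sysA P Q x := by
  refine Prod.ext ?_ ?_ <;>
    simp [Matrix.mulVec_smul, smul_add]

/-- `(v, vl', vl'', vr', vr'')` is a continuous solution on `[a, b]`, twice continuously
differentiable on `[a, x₀]` and on `[x₀, b]`, of
`(v' + γv)' + γ(v' + γv) + Σⱼ (Tⱼ - ixⱼ)² v = 0` on `[a, x₀) ∪ (x₀, b]`, with boundary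
values `v(a) = uₐ`, `v(b) = u_b` and derivative jump `v'(x₀⁺) - v'(x₀⁻) = u`.
Here `γ = T0 - ic`. -/
def IsGreensNahmSol {n : ℕ} (a b x₀ : ℝ)
    (T0 T0' T1 T2 T3 : ℝ → Matrix (Fin n) (Fin n) ℂ)
    (c x1 x2 x3 : ℝ) (u ua ub : Fin n → ℂ)
    (v vl' vl'' vr' vr'' : ℝ → Fin n → ℂ) : Prop :=
  (∀ i, ContinuousOn (fun z => v z i) (Icc a b)) ∧
  (∀ z ∈ Icc a x₀, ∀ i, HasDerivWithinAt (fun t => v t i) (vl' z i) (Icc a x₀) z) ∧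
  (∀ z ∈ Icc a x₀, ∀ i, HasDerivWithinAt (fun t => vl' t i) (vl'' z i) (Icc a x₀) z) ∧
  (∀ i, ContinuousOn (fun z => vl'' z i) (Icc a x₀)) ∧
  (∀ z ∈ Icc x₀ b, ∀ i, HasDerivWithinAt (fun t => v t i) (vr' z i) (Icc x₀ b) z) ∧
  (∀ z ∈ Icc x₀ b, ∀ i, HasDerivWithinAt (fun t => vr' t i) (vr'' z i) (Icc x₀ b) z) ∧
  (∀ i, ContinuousOn (fun z => vr'' z i) (Icc x₀ b)) ∧
  (∀ z ∈ Ico a x₀,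
      (vl'' z + (T0' z).mulVec (v z)
          + (T0 z - (Complex.I * ((c : ℝ) : ℂ))
              • (1 : Matrix (Fin n) (Fin n) ℂ)).mulVec (vl' z))
        + (T0 z - (Complex.I * ((c : ℝ) : ℂ))
              • (1 : Matrix (Fin n) (Fin n) ℂ)).mulVec
            (vl' z + (T0 z - (Complex.I * ((c : ℝ) : ℂ))
              • (1 : Matrix (Fin n) (Fin n) ℂ)).mulVec (v z))
        + ((T1 z - (Complex.I * ((x1 : ℝ) : ℂ)) • (1 : Matrix (Fin n) (Fin n) ℂ))
            * (T1 z - (Complex.I * ((x1 : ℝ) : ℂ)) • (1 : Matrix (Fin n) (Fin n) ℂ))).mulVec (v z)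
        + ((T2 z - (Complex.I * ((x2 : ℝ) : ℂ)) • (1 : Matrix (Fin n) (Fin n) ℂ))
            * (T2 z - (Complex.I * ((x2 : ℝ) : ℂ)) • (1 : Matrix (Fin n) (Fin n) ℂ))).mulVec (v z)
        + ((T3 z - (Complex.I * ((x3 : ℝ) : ℂ)) • (1 : Matrix (Fin n) (Fin n) ℂ))
            * (T3 z - (Complex.I * ((x3 : ℝ) : ℂ)) • (1 : Matrix (Fin n) (Fin n) ℂ))).mulVec (v z)
        = 0) ∧
  (∀ z ∈ Ioc x₀ b,
      (vr'' z + (T0' z).mulVec (v z)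
          + (T0 z - (Complex.I * ((c : ℝ) : ℂ))
              • (1 : Matrix (Fin n) (Fin n) ℂ)).mulVec (vr' z))
        + (T0 z - (Complex.I * ((c : ℝ) : ℂ))
              • (1 : Matrix (Fin n) (Fin n) ℂ)).mulVec
            (vr' z + (T0 z - (Complex.I * ((c : ℝ) : ℂ))
              • (1 : Matrix (Fin n) (Fin n) ℂ)).mulVec (v z))
        + ((T1 z - (Complex.I * ((x1 : ℝ) : ℂ)) • (1 : Matrix (Fin n) (Fin n) ℂ))
            * (T1 z - (Complex.I * ((x1 : ℝ) : ℂ)) • (1 : Matrix (Fin n) (Fin n) ℂ))).mulVec (v z)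
        + ((T2 z - (Complex.I * ((x2 : ℝ) : ℂ)) • (1 : Matrix (Fin n) (Fin n) ℂ))
            * (T2 z - (Complex.I * ((x2 : ℝ) : ℂ)) • (1 : Matrix (Fin n) (Fin n) ℂ))).mulVec (v z)
        + ((T3 z - (Complex.I * ((x3 : ℝ) : ℂ)) • (1 : Matrix (Fin n) (Fin n) ℂ))
            * (T3 z - (Complex.I * ((x3 : ℝ) : ℂ)) • (1 : Matrix (Fin n) (Fin n) ℂ))).mulVec (v z)
        = 0) ∧
  v a = ua ∧ v b = ub ∧
  vr' x₀ - vl' x₀ = u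

/-- Existence and uniqueness of the Green's function with a delta
source `δ_{x₀} u` for `D₁*D₁` on `[a, b]`, with Dirichlet boundary values. -/
theorem greens_function_existence_uniqueness {n : ℕ} (a b : ℝ) (hab : a < b)
    (T0 T0' T1 T2 T3 : ℝ → Matrix (Fin n) (Fin n) ℂ)
    (hT0 : ∀ z ∈ Icc a b, ∀ i j,
        HasDerivWithinAt (fun t => T0 t i j) (T0' z i j) (Icc a b) z)
    (hT0' : ∀ i j, ContinuousOn (fun z => T0' z i j) (Icc a b))
    (hT1 : ∀ i j, ContinuousOn (fun z => T1 z i j) (Icc a b))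
    (hT2 : ∀ i j, ContinuousOn (fun z => T2 z i j) (Icc a b))
    (hT3 : ∀ i j, ContinuousOn (fun z => T3 z i j) (Icc a b))
    (hskew : ∀ z ∈ Icc a b,
        (T0 z)ᴴ = -T0 z ∧ (T1 z)ᴴ = -T1 z ∧ (T2 z)ᴴ = -T2 z ∧ (T3 z)ᴴ = -T3 z)
    (c x1 x2 x3 : ℝ)
    (x₀ : ℝ) (hx₀ : x₀ ∈ Ioo a b) (u ua ub : Fin n → ℂ) :
    ∃ v vl' vl'' vr' vr'' : ℝ → Fin n → ℂ,
      IsGreensNahmSol a b x₀ T0 T0' T1 T2 T3 c x1 x2 x3 u ua ub v vl' vl'' vr' vr'' ∧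
      ∀ w wl' wl'' wr' wr'' : ℝ → Fin n → ℂ,
        IsGreensNahmSol a b x₀ T0 T0' T1 T2 T3 c x1 x2 x3 u ua ub w wl' wl'' wr' wr'' →
        ∀ z ∈ Icc a b, w z = v z := by
  obtain ⟨hax₀, hx₀b⟩ := hx₀
  have hab' : a ≤ b := hab.le
  have hsubL : Icc a x₀ ⊆ Icc a b := Icc_subset_Icc le_rfl hx₀b.le
  have hsubR : Icc x₀ b ⊆ Icc a b := Icc_subset_Icc hax₀.le le_rfl
  set γ : ℝ → Matrix (Fin n) (Fin n) ℂ :=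
    fun t => T0 t - (Complex.I * ((c : ℝ) : ℂ)) • (1 : Matrix (Fin n) (Fin n) ℂ) with hγ
  set s1 : ℝ → Matrix (Fin n) (Fin n) ℂ :=
    fun t => T1 t - (Complex.I * ((x1 : ℝ) : ℂ)) • (1 : Matrix (Fin n) (Fin n) ℂ) with hs1
  set s2 : ℝ → Matrix (Fin n) (Fin n) ℂ :=
    fun t => T2 t - (Complex.I * ((x2 : ℝ) : ℂ)) • (1 : Matrix (Fin n) (Fin n) ℂ) with hs2
  set s3 : ℝ → Matrix (Fin n) (Fin n) ℂ :=
    fun t => T3 t - (Complex.I * ((x3 : ℝ) : ℂ)) • (1 : Matrix (Fin n) (Fin n) ℂ) with hs3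
  set bigP : ℝ → Matrix (Fin n) (Fin n) ℂ :=
    fun t => T0' t + γ t * γ t + s1 t * s1 t + s2 t * s2 t + s3 t * s3 t with hbigP
  have hγd : ∀ t ∈ Icc a b, ∀ i j,
      HasDerivWithinAt (fun s => γ s i j) (T0' t i j) (Icc a b) t := by
    intro t ht i j
    exact (hT0 t ht i j).sub_const _
  have hγskew : ∀ t ∈ Icc a b, (γ t)ᴴ = -(γ t) := fun t ht => skew_shift _ _ (hskew t ht).1
  have hs1skew : ∀ t ∈ Icc a b, (s1 t)ᴴ = -(s1 t) := fun t ht => skew_shift _ _ (hskew t ht).2.1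
  have hs2skew : ∀ t ∈ Icc a b, (s2 t)ᴴ = -(s2 t) := fun t ht => skew_shift _ _ (hskew t ht).2.2.1
  have hs3skew : ∀ t ∈ Icc a b, (s3 t)ᴴ = -(s3 t) := fun t ht => skew_shift _ _ (hskew t ht).2.2.2
  have hT0c : ∀ i j, ContinuousOn (fun z => T0 z i j) (Icc a b) :=
    fun i j z hz => (hT0 z hz i j).continuousWithinAt
  have hγc : ContinuousOn γ (Icc a b) := (continuousOn_matrix hT0c).sub continuousOn_const
  have hs1c : ContinuousOn s1 (Icc a b) := (continuousOn_matrix hT1).sub continuousOn_const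
  have hs2c : ContinuousOn s2 (Icc a b) := (continuousOn_matrix hT2).sub continuousOn_const
  have hs3c : ContinuousOn s3 (Icc a b) := (continuousOn_matrix hT3).sub continuousOn_const
  have hbigPc : ContinuousOn bigP (Icc a b) :=
    ((((continuousOn_matrix hT0').add (contOn_matmul hγc hγc)).add
      (contOn_matmul hs1c hs1c)).add (contOn_matmul hs2c hs2c)).add (contOn_matmul hs3c hs3c)
  set π : ℝ → ℝ := fun t => ((projIcc a b hab' t : Icc a b) : ℝ) with hπ
  have hπmem : ∀ t, π t ∈ Icc a b := fun t => (projIcc a b hab' t).2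
  have hπeq : ∀ t ∈ Icc a b, π t = t := by
    intro t ht
    rw [hπ]
    simp [projIcc_of_mem hab' ht]
  have hcontπ : ∀ {M : ℝ → Matrix (Fin n) (Fin n) ℂ}, ContinuousOn M (Icc a b) →
      Continuous (fun t => M (π t)) := fun {M} hM => hM.restrict.comp continuous_projIcc
  set A : ℝ → ((Fin n → ℂ) × (Fin n → ℂ)) →L[ℝ] ((Fin n → ℂ) × (Fin n → ℂ)) :=
    fun t => sysA (-(bigP (π t))) (-((2:ℂ) • γ (π t))) with hA
  have hAcont : Continuous A :=
    continuous_sysA ((hcontπ hbigPc).neg) (((hcontπ hγc).const_smul (2:ℂ)).neg)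
  have hA2 : ∀ (t : ℝ) (x : (Fin n → ℂ) × (Fin n → ℂ)),
      (A t x).2 = -(bigP (π t)).mulVec x.1 - (2:ℂ) • ((γ (π t)).mulVec x.2) := by
    intro t x
    show (-(bigP (π t))).mulVec x.1 + (-((2:ℂ) • γ (π t))).mulVec x.2 = _
    rw [Matrix.neg_mulVec, Matrix.neg_mulVec, Matrix.smul_mulVec, sub_eq_add_neg]
  have hAsmul : ∀ (t : ℝ) (cc : ℂ) (x : (Fin n → ℂ) × (Fin n → ℂ)),
      A t (cc • x) = cc • A t x := fun t cc x => sysA_smulC _ _ cc x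
  -- solution families
  choose fL hfLa hfLd using fun y => exists_linear_ode_left A hAcont hax₀.le y
  choose fR hfRb hfRd using fun y => exists_linear_ode_right A hAcont hx₀b.le y
  have hfLc : ∀ y, ContinuousOn (fL y) (Icc a x₀) := fun y t ht => (hfLd y t ht).continuousWithinAt
  have hfRc : ∀ y, ContinuousOn (fR y) (Icc x₀ b) := fun y t ht => (hfRd y t ht).continuousWithinAt
  -- linearity of the flows
  have hfLlin : ∀ (cc : ℂ) (y z : (Fin n → ℂ) × (Fin n → ℂ)),
      EqOn (fL (cc • y + z)) (fun t => cc • fL y t + fL z t) (Icc a x₀) := by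
    intro cc y z
    refine linear_ode_unique A hAcont hax₀.le (left_mem_Icc.mpr hax₀.le) (hfLc _) (hfLd _)
      (((hfLc y).const_smul cc).add (hfLc z)) ?_ (by simp only [hfLa])
    intro t ht
    have h := ((hfLd y t ht).const_smul cc).add (hfLd z t ht)
    have he : A t (cc • fL y t + fL z t) = cc • A t (fL y t) + A t (fL z t) := by
      rw [map_add, hAsmul]
    rw [he]
    exact h
  have hfRlin : ∀ (cc : ℂ) (y z : (Fin n → ℂ) × (Fin n → ℂ)),
      EqOn (fR (cc • y + z)) (fun t => cc • fR y t + fR z t) (Icc x₀ b) := by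
    intro cc y z
    refine linear_ode_unique A hAcont hx₀b.le (right_mem_Icc.mpr hx₀b.le) (hfRc _) (hfRd _)
      (((hfRc y).const_smul cc).add (hfRc z)) ?_ (by simp only [hfRb])
    intro t ht
    have h := ((hfRd y t ht).const_smul cc).add (hfRd z t ht)
    have he : A t (cc • fR y t + fR z t) = cc • A t (fR y t) + A t (fR z t) := by
      rw [map_add, hAsmul]
    rw [he]
    exact h
  have hx₀L : x₀ ∈ Icc a x₀ := right_mem_Icc.mpr hax₀.le
  have hx₀R : x₀ ∈ Icc x₀ b := left_mem_Icc.mpr hx₀b.le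
  have hL0 : ∀ t ∈ Icc a x₀, fL 0 t = 0 := by
    refine linear_ode_unique A hAcont hax₀.le (left_mem_Icc.mpr hax₀.le) (hfLc _) (hfLd _)
      continuousOn_const ?_ (by rw [hfLa])
    intro t ht
    simpa using hasDerivWithinAt_const t (Icc a x₀) (0 : (Fin n → ℂ) × (Fin n → ℂ))
  have hR0 : ∀ t ∈ Icc x₀ b, fR 0 t = 0 := by
    refine linear_ode_unique A hAcont hx₀b.le (right_mem_Icc.mpr hx₀b.le) (hfRc _) (hfRd _)
      continuousOn_const ?_ (by rw [hfRb])
    intro t ht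
    simpa using hasDerivWithinAt_const t (Icc x₀ b) (0 : (Fin n → ℂ) × (Fin n → ℂ))
  have hLadd : ∀ y z, fL (y + z) x₀ = fL y x₀ + fL z x₀ := by
    intro y z
    have := hfLlin 1 y z hx₀L
    simpa using this
  have hRadd : ∀ y z, fR (y + z) x₀ = fR y x₀ + fR z x₀ := by
    intro y z
    have := hfRlin 1 y z hx₀R
    simpa using this
  have hLsmul : ∀ (cc : ℂ) y, fL (cc • y) x₀ = cc • fL y x₀ := by
    intro cc y
    have h := hfLlin cc y 0 hx₀L
    simp only [add_zero] at h
    rw [h, hL0 x₀ hx₀L, add_zero]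
  have hRsmul : ∀ (cc : ℂ) y, fR (cc • y) x₀ = cc • fR y x₀ := by
    intro cc y
    have h := hfRlin cc y 0 hx₀R
    simp only [add_zero] at h
    rw [h, hR0 x₀ hx₀R, add_zero]
  -- the matching linear map
  set Θ : ((Fin n → ℂ) × (Fin n → ℂ)) →ₗ[ℂ] ((Fin n → ℂ) × (Fin n → ℂ)) :=
    { toFun := fun pq => fR (0, pq.2) x₀ - fL (0, pq.1) x₀
      map_add' := by
        intro y z
        have e1 : ((0 : Fin n → ℂ), (y + z).2) = ((0, y.2) : (Fin n → ℂ) × (Fin n → ℂ)) + (0, z.2) := by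
          simp [Prod.ext_iff]
        have e2 : ((0 : Fin n → ℂ), (y + z).1) = ((0, y.1) : (Fin n → ℂ) × (Fin n → ℂ)) + (0, z.1) := by
          simp [Prod.ext_iff]
        rw [e1, e2, hRadd, hLadd]
        abel
      map_smul' := by
        intro cc y
        have e1 : ((0 : Fin n → ℂ), (cc • y).2) = cc • ((0, y.2) : (Fin n → ℂ) × (Fin n → ℂ)) := by
          simp [Prod.ext_iff]
        have e2 : ((0 : Fin n → ℂ), (cc • y).1) = cc • ((0, y.1) : (Fin n → ℂ) × (Fin n → ℂ)) := by
          simp [Prod.ext_iff]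
        rw [e1, e2, hRsmul, hLsmul]
        simp [smul_sub] } with hΘ
  have hΘapply : ∀ pq : (Fin n → ℂ) × (Fin n → ℂ),
      Θ pq = fR (0, pq.2) x₀ - fL (0, pq.1) x₀ := fun pq => rfl
  -- kernel of Θ is trivial (energy argument)
  have hker : ∀ pq, Θ pq = 0 → pq = 0 := by
    intro pq h0
    rw [hΘapply] at h0
    have hmatch : fL (0, pq.1) x₀ = fR (0, pq.2) x₀ := (sub_eq_zero.mp h0).symm
    set F : ℝ → (Fin n → ℂ) × (Fin n → ℂ) :=
      fun t => if t ≤ x₀ then fL (0, pq.1) t else fR (0, pq.2) t with hF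
    have hFd : ∀ t ∈ Icc a b, HasDerivWithinAt F (A t (F t)) (Icc a b) t := by
      intro t ht
      have h := glue_hasDerivWithinAt hax₀.le hx₀b.le (hfLd (0, pq.1)) (hfRd (0, pq.2))
        hmatch (by rw [hmatch]) t ht
      by_cases htx : t ≤ x₀
      · simpa [hF, htx] using h
      · simpa [hF, htx] using h
    set w : ℝ → Fin n → ℂ := fun t => (F t).1 with hw
    set w2 : ℝ → Fin n → ℂ := fun t => (F t).2 with hw2
    have hwdL : ∀ t ∈ Icc a x₀, HasDerivWithinAt w (w2 t) (Icc a x₀) t :=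
      fun t ht => ((hFd t (hsubL ht)).mono hsubL).fst
    have hwdR : ∀ t ∈ Icc x₀ b, HasDerivWithinAt w (w2 t) (Icc x₀ b) t :=
      fun t ht => ((hFd t (hsubR ht)).mono hsubR).fst
    have hw2dL : ∀ t ∈ Icc a x₀, HasDerivWithinAt w2
        (-((T0' t + γ t * γ t + s1 t * s1 t + s2 t * s2 t + s3 t * s3 t).mulVec (w t))
          - (2:ℂ) • ((γ t).mulVec (w2 t))) (Icc a x₀) t := by
      intro t ht
      have h : HasDerivWithinAt w2 ((A t (F t)).2) (Icc a x₀) t :=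
        ((hFd t (hsubL ht)).mono hsubL).snd
      rw [hA2 t (F t), hπeq t (hsubL ht)] at h
      exact h
    have hw2dR : ∀ t ∈ Icc x₀ b, HasDerivWithinAt w2
        (-((T0' t + γ t * γ t + s1 t * s1 t + s2 t * s2 t + s3 t * s3 t).mulVec (w t))
          - (2:ℂ) • ((γ t).mulVec (w2 t))) (Icc x₀ b) t := by
      intro t ht
      have h : HasDerivWithinAt w2 ((A t (F t)).2) (Icc x₀ b) t :=
        ((hFd t (hsubR ht)).mono hsubR).snd
      rw [hA2 t (F t), hπeq t (hsubR ht)] at h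
      exact h
    have hwa : w a = 0 := by
      show (if a ≤ x₀ then fL (0, pq.1) a else fR (0, pq.2) a).1 = 0
      rw [if_pos hax₀.le, hfLa]
    have hwb : w b = 0 := by
      show (if b ≤ x₀ then fL (0, pq.1) b else fR (0, pq.2) b).1 = 0
      rw [if_neg (not_le.mpr hx₀b), hfRb]
    have energy := energy_vanish ⟨hax₀, hx₀b⟩ γ T0' s1 s2 s3 hγd hγskew hs1skew hs2skew hs3skew
      w w2 w2 hwdL hw2dL hwdR hw2dR rfl hwa hwb
    have hp1 : pq.1 = 0 := by
      have h1 : w2 a = 0 := (energy.1 a (left_mem_Icc.mpr hax₀.le)).2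
      have h2 : w2 a = pq.1 := by
        show (if a ≤ x₀ then fL (0, pq.1) a else fR (0, pq.2) a).2 = pq.1
        rw [if_pos hax₀.le, hfLa]
      rw [h2] at h1
      exact h1
    have hp2 : pq.2 = 0 := by
      have h1 : w2 b = 0 := (energy.2 b (right_mem_Icc.mpr hx₀b.le)).2
      have h2 : w2 b = pq.2 := by
        show (if b ≤ x₀ then fL (0, pq.1) b else fR (0, pq.2) b).2 = pq.2
        rw [if_neg (not_le.mpr hx₀b), hfRb]
      rw [h2] at h1
      exact h1
    exact Prod.ext hp1 hp2
  have hinj : Function.Injective Θ := by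
    intro y z hyz
    have h1 : Θ (y - z) = 0 := by rw [map_sub, hyz, sub_self]
    exact sub_eq_zero.mp (hker _ h1)
  obtain ⟨pq, hpq⟩ := LinearMap.injective_iff_surjective.mp hinj
    ((0, u) + fL (ua, 0) x₀ - fR (ub, 0) x₀)
  set yL : (Fin n → ℂ) × (Fin n → ℂ) := (ua, pq.1) with hyL
  set yR : (Fin n → ℂ) × (Fin n → ℂ) := (ub, pq.2) with hyR
  have hdiff : fR yR x₀ - fL yL x₀ = (0, u) := by
    have hpq' : fR (0, pq.2) x₀ - fL (0, pq.1) x₀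
        = (0, u) + fL (ua, 0) x₀ - fR (ub, 0) x₀ := by
      rw [← hΘapply]; exact hpq
    have e1 : yL = (ua, 0) + (0, pq.1) := by rw [hyL]; simp [Prod.ext_iff]
    have e2 : yR = (ub, 0) + (0, pq.2) := by rw [hyR]; simp [Prod.ext_iff]
    rw [e1, e2, hRadd, hLadd]
    calc (fR (ub, 0) x₀ + fR (0, pq.2) x₀) - (fL (ua, 0) x₀ + fL (0, pq.1) x₀)
        = (fR (0, pq.2) x₀ - fL (0, pq.1) x₀) + fR (ub, 0) x₀ - fL (ua, 0) x₀ := by abel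
      _ = (0, u) := by rw [hpq']; abel
  have hvmatch : (fL yL x₀).1 = (fR yR x₀).1 := by
    have h := congrArg Prod.fst hdiff
    simp only [Prod.fst_sub] at h
    exact (sub_eq_zero.mp h).symm
  have hjumpu : (fR yR x₀).2 - (fL yL x₀).2 = u := by
    have h := congrArg Prod.snd hdiff
    simpa only [Prod.snd_sub] using h
  -- the candidate solution
  set v : ℝ → Fin n → ℂ := fun t => if t ≤ x₀ then (fL yL t).1 else (fR yR t).1 with hv
  set vl' : ℝ → Fin n → ℂ := fun t => (fL yL t).2 with hvl'
  set vr' : ℝ → Fin n → ℂ := fun t => (fR yR t).2 with hvr'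
  set vl'' : ℝ → Fin n → ℂ := fun t =>
    -(bigP (π t)).mulVec ((fL yL t).1) - (2:ℂ) • ((γ (π t)).mulVec ((fL yL t).2)) with hvl''
  set vr'' : ℝ → Fin n → ℂ := fun t =>
    -(bigP (π t)).mulVec ((fR yR t).1) - (2:ℂ) • ((γ (π t)).mulVec ((fR yR t).2)) with hvr''
  have hveqL : ∀ t ∈ Icc a x₀, v t = (fL yL t).1 := fun t ht => if_pos ht.2
  have hveqR : ∀ t ∈ Icc x₀ b, v t = (fR yR t).1 := by
    intro t ht
    rcases lt_or_eq_of_le ht.1 with h | h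
    · exact if_neg (not_le.mpr h)
    · rw [hv]
      simp only [← h, if_pos le_rfl]
      exact hvmatch
  -- vector-level solution facts
  have hvc : ContinuousOn v (Icc a b) :=
    glue_continuousOn hax₀.le hx₀b.le (continuous_fst.comp_continuousOn (hfLc yL))
      (continuous_fst.comp_continuousOn (hfRc yR)) hvmatch
  have hvdL : ∀ z ∈ Icc a x₀, HasDerivWithinAt v (vl' z) (Icc a x₀) z := by
    intro z hz
    have h1 : HasDerivWithinAt (fun t => (fL yL t).1) (vl' z) (Icc a x₀) z := (hfLd yL z hz).fst
    exact h1.congr (fun x hx => hveqL x hx) (hveqL z hz)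
  have hvdR : ∀ z ∈ Icc x₀ b, HasDerivWithinAt v (vr' z) (Icc x₀ b) z := by
    intro z hz
    have h1 : HasDerivWithinAt (fun t => (fR yR t).1) (vr' z) (Icc x₀ b) z := (hfRd yR z hz).fst
    exact h1.congr (fun x hx => hveqR x hx) (hveqR z hz)
  have hvdL' : ∀ z ∈ Icc a x₀, HasDerivWithinAt vl' (vl'' z) (Icc a x₀) z := by
    intro z hz
    have h : HasDerivWithinAt vl' ((A z (fL yL z)).2) (Icc a x₀) z := (hfLd yL z hz).snd
    rw [hA2 z (fL yL z)] at h
    exact h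
  have hvdR' : ∀ z ∈ Icc x₀ b, HasDerivWithinAt vr' (vr'' z) (Icc x₀ b) z := by
    intro z hz
    have h : HasDerivWithinAt vr' ((A z (fR yR z)).2) (Icc x₀ b) z := (hfRd yR z hz).snd
    rw [hA2 z (fR yR z)] at h
    exact h
  have hvl''c : ContinuousOn vl'' (Icc a x₀) :=
    ((contOn_mulVec (hcontπ hbigPc).continuousOn
        (continuous_fst.comp_continuousOn (hfLc yL))).neg).sub
      ((contOn_mulVec (hcontπ hγc).continuousOn
        (continuous_snd.comp_continuousOn (hfLc yL))).const_smul (2:ℂ))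
  have hvr''c : ContinuousOn vr'' (Icc x₀ b) :=
    ((contOn_mulVec (hcontπ hbigPc).continuousOn
        (continuous_fst.comp_continuousOn (hfRc yR))).neg).sub
      ((contOn_mulVec (hcontπ hγc).continuousOn
        (continuous_snd.comp_continuousOn (hfRc yR))).const_smul (2:ℂ))
  have hvl''E : ∀ z ∈ Icc a x₀, vl'' z =
      -((T0' z + γ z * γ z + s1 z * s1 z + s2 z * s2 z + s3 z * s3 z).mulVec (v z))
        - (2:ℂ) • ((γ z).mulVec (vl' z)) := by
    intro z hz
    rw [hvl'']
    simp only [hπeq z (hsubL hz), hveqL z hz, hbigP, hvl']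
  have hvr''E : ∀ z ∈ Icc x₀ b, vr'' z =
      -((T0' z + γ z * γ z + s1 z * s1 z + s2 z * s2 z + s3 z * s3 z).mulVec (v z))
        - (2:ℂ) • ((γ z).mulVec (vr' z)) := by
    intro z hz
    rw [hvr'']
    simp only [hπeq z (hsubR hz), hveqR z hz, hbigP, hvr']
  have hva : v a = ua := by
    rw [hveqL a (left_mem_Icc.mpr hax₀.le), hfLa]
  have hvb : v b = ub := by
    rw [hveqR b (right_mem_Icc.mpr hx₀b.le), hfRb]
  have hvjump : vr' x₀ - vl' x₀ = u := hjumpu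
  refine ⟨v, vl', vl'', vr', vr'', ⟨?_, ?_, ?_, ?_, ?_, ?_, ?_, ?_, ?_, hva, hvb, hvjump⟩, ?_⟩
  · exact fun i => (continuous_apply i).comp_continuousOn hvc
  · exact fun z hz i => hasDerivWithinAt_pi.1 (hvdL z hz) i
  · exact fun z hz i => hasDerivWithinAt_pi.1 (hvdL' z hz) i
  · exact fun i => (continuous_apply i).comp_continuousOn hvl''c
  · exact fun z hz i => hasDerivWithinAt_pi.1 (hvdR z hz) i
  · exact fun z hz i => hasDerivWithinAt_pi.1 (hvdR' z hz) i
  · exact fun i => (continuous_apply i).comp_continuousOn hvr''c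
  · -- the equation on the left piece
    intro z hz
    rw [bigExpr_eq, sub_eq_zero]
    exact hvl''E z (Ico_subset_Icc_self hz)
  · intro z hz
    rw [bigExpr_eq, sub_eq_zero]
    exact hvr''E z (Ioc_subset_Icc_self hz)
  -- uniqueness
  intro w wl' wl'' wr' wr'' hsol
  obtain ⟨hwc, hwld, hwl'd, hwl''c, hwrd, hwr'd, hwr''c, heql, heqr, hwa2, hwb2, hwjump⟩ := hsol
  have hwcv : ContinuousOn w (Icc a b) := continuousOn_pi.2 hwc
  have hwldv : ∀ z ∈ Icc a x₀, HasDerivWithinAt w (wl' z) (Icc a x₀) z :=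
    fun z hz => hasDerivWithinAt_pi.2 (hwld z hz)
  have hwl'dv : ∀ z ∈ Icc a x₀, HasDerivWithinAt wl' (wl'' z) (Icc a x₀) z :=
    fun z hz => hasDerivWithinAt_pi.2 (hwl'd z hz)
  have hwrdv : ∀ z ∈ Icc x₀ b, HasDerivWithinAt w (wr' z) (Icc x₀ b) z :=
    fun z hz => hasDerivWithinAt_pi.2 (hwrd z hz)
  have hwr'dv : ∀ z ∈ Icc x₀ b, HasDerivWithinAt wr' (wr'' z) (Icc x₀ b) z :=
    fun z hz => hasDerivWithinAt_pi.2 (hwr'd z hz)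
  have hwl''cv : ContinuousOn wl'' (Icc a x₀) := continuousOn_pi.2 hwl''c
  have hwr''cv : ContinuousOn wr'' (Icc x₀ b) := continuousOn_pi.2 hwr''c
  have heqlE : ∀ z ∈ Ico a x₀, wl'' z =
      -((T0' z + γ z * γ z + s1 z * s1 z + s2 z * s2 z + s3 z * s3 z).mulVec (w z))
        - (2:ℂ) • ((γ z).mulVec (wl' z)) := by
    intro z hz
    have h := heql z hz
    rw [bigExpr_eq] at h
    exact sub_eq_zero.mp h
  have heqrE : ∀ z ∈ Ioc x₀ b, wr'' z =
      -((T0' z + γ z * γ z + s1 z * s1 z + s2 z * s2 z + s3 z * s3 z).mulVec (w z))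
        - (2:ℂ) • ((γ z).mulVec (wr' z)) := by
    intro z hz
    have h := heqr z hz
    rw [bigExpr_eq] at h
    exact sub_eq_zero.mp h
  -- the difference and its second derivatives in energy form
  set d : ℝ → Fin n → ℂ := fun t => w t - v t with hd
  set dl : ℝ → Fin n → ℂ := fun t => wl' t - vl' t with hdl
  set dr : ℝ → Fin n → ℂ := fun t => wr' t - vr' t with hdr
  have hwl'c : ContinuousOn wl' (Icc a x₀) := fun z hz => (hwl'dv z hz).continuousWithinAt
  have hvl'c : ContinuousOn vl' (Icc a x₀) := fun z hz => (hvdL' z hz).continuousWithinAt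
  have hwr'c : ContinuousOn wr' (Icc x₀ b) := fun z hz => (hwr'dv z hz).continuousWithinAt
  have hvr'c : ContinuousOn vr' (Icc x₀ b) := fun z hz => (hvdR' z hz).continuousWithinAt
  have hddL : ∀ z ∈ Icc a x₀, HasDerivWithinAt d (dl z) (Icc a x₀) z :=
    fun z hz => (hwldv z hz).sub (hvdL z hz)
  have hddR : ∀ z ∈ Icc x₀ b, HasDerivWithinAt d (dr z) (Icc x₀ b) z :=
    fun z hz => (hwrdv z hz).sub (hvdR z hz)
  -- extension by continuity of the identity for (wl'' - vl'')
  set HL : ℝ → Fin n → ℂ := fun z => (wl'' z - vl'' z) -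
      (-((T0' z + γ z * γ z + s1 z * s1 z + s2 z * s2 z + s3 z * s3 z).mulVec (d z))
        - (2:ℂ) • ((γ z).mulVec (dl z))) with hHL
  have hbigPcL : ContinuousOn bigP (Icc a x₀) := hbigPc.mono hsubL
  have hγcL : ContinuousOn γ (Icc a x₀) := hγc.mono hsubL
  have hHLc : ContinuousOn HL (Icc a x₀) := by
    refine (hwl''cv.sub hvl''c).sub (ContinuousOn.sub ?_ ?_)
    · exact (contOn_mulVec hbigPcL ((hwcv.mono hsubL).sub (hvc.mono hsubL))).neg
    · exact (contOn_mulVec hγcL (hwl'c.sub hvl'c)).const_smul (2:ℂ)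
  have hHL0 : ∀ z ∈ Icc a x₀, HL z = 0 := by
    refine eq_zero_Icc_of_Ico hax₀ hHLc ?_
    intro z hz
    simp only [hHL, hd, hdl]
    rw [heqlE z hz, hvl''E z (Ico_subset_Icc_self hz)]
    simp only [Matrix.mulVec_sub, smul_sub]
    abel
  set HR : ℝ → Fin n → ℂ := fun z => (wr'' z - vr'' z) -
      (-((T0' z + γ z * γ z + s1 z * s1 z + s2 z * s2 z + s3 z * s3 z).mulVec (d z))
        - (2:ℂ) • ((γ z).mulVec (dr z))) with hHR
  have hbigPcR : ContinuousOn bigP (Icc x₀ b) := hbigPc.mono hsubR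
  have hγcR : ContinuousOn γ (Icc x₀ b) := hγc.mono hsubR
  have hHRc : ContinuousOn HR (Icc x₀ b) := by
    refine (hwr''cv.sub hvr''c).sub (ContinuousOn.sub ?_ ?_)
    · exact (contOn_mulVec hbigPcR ((hwcv.mono hsubR).sub (hvc.mono hsubR))).neg
    · exact (contOn_mulVec hγcR (hwr'c.sub hvr'c)).const_smul (2:ℂ)
  have hHR0 : ∀ z ∈ Icc x₀ b, HR z = 0 := by
    refine eq_zero_Icc_of_Ioc hx₀b hHRc ?_
    intro z hz
    simp only [hHR, hd, hdr]
    rw [heqrE z hz, hvr''E z (Ioc_subset_Icc_self hz)]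
    simp only [Matrix.mulVec_sub, smul_sub]
    abel
  have hddL' : ∀ z ∈ Icc a x₀, HasDerivWithinAt dl
      (-((T0' z + γ z * γ z + s1 z * s1 z + s2 z * s2 z + s3 z * s3 z).mulVec (d z))
        - (2:ℂ) • ((γ z).mulVec (dl z))) (Icc a x₀) z := by
    intro z hz
    have h := (hwl'dv z hz).sub (hvdL' z hz)
    have he : wl'' z - vl'' z =
        -((T0' z + γ z * γ z + s1 z * s1 z + s2 z * s2 z + s3 z * s3 z).mulVec (d z))
          - (2:ℂ) • ((γ z).mulVec (dl z)) := by
      have h2 : HL z = 0 := hHL0 z hz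
      simp only [hHL] at h2
      exact sub_eq_zero.mp h2
    rw [he] at h
    exact h
  have hddR' : ∀ z ∈ Icc x₀ b, HasDerivWithinAt dr
      (-((T0' z + γ z * γ z + s1 z * s1 z + s2 z * s2 z + s3 z * s3 z).mulVec (d z))
        - (2:ℂ) • ((γ z).mulVec (dr z))) (Icc x₀ b) z := by
    intro z hz
    have h := (hwr'dv z hz).sub (hvdR' z hz)
    have he : wr'' z - vr'' z =
        -((T0' z + γ z * γ z + s1 z * s1 z + s2 z * s2 z + s3 z * s3 z).mulVec (d z))
          - (2:ℂ) • ((γ z).mulVec (dr z)) := by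
      have h2 : HR z = 0 := hHR0 z hz
      simp only [hHR] at h2
      exact sub_eq_zero.mp h2
    rw [he] at h
    exact h
  have hjumpd : dr x₀ = dl x₀ := by
    show wr' x₀ - vr' x₀ = wl' x₀ - vl' x₀
    have h3 : (wr' x₀ - vr' x₀) - (wl' x₀ - vl' x₀)
        = (wr' x₀ - wl' x₀) - (vr' x₀ - vl' x₀) := by abel
    rw [hwjump, hvjump, sub_self] at h3
    exact sub_eq_zero.mp h3
  have hda : d a = 0 := by show w a - v a = 0; rw [hwa2, hva, sub_self]
  have hdb : d b = 0 := by show w b - v b = 0; rw [hwb2, hvb, sub_self]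
  have energy := energy_vanish ⟨hax₀, hx₀b⟩ γ T0' s1 s2 s3 hγd hγskew hs1skew hs2skew hs3skew
    d dl dr hddL hddL' hddR hddR' hjumpd hda hdb
  intro z hz
  by_cases hzx : z ≤ x₀
  · have h2 : w z - v z = 0 := (energy.1 z ⟨hz.1, hzx⟩).1
    exact sub_eq_zero.mp h2
  · have h2 : w z - v z = 0 := (energy.2 z ⟨(not_le.mp hzx).le, hz.2⟩).1
    exact sub_eq_zero.mp h2
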